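/- Fix α ∈ ℝ, δ > 0, ε > 0, n ∈ ℕ and a Borel probability measure P on Ω. Then the map ω ↦ M(α,δ,n,ε,ω) is measurable with respect to the P-completion of the Borel σ-algebra of Ω. -/

import Mathlib

open Set Filter Topology MeasureTheory ENNReal NNReal

noncomputable section

namespace Paper

variable {Ω M : Type*} [MetricSpace Ω] [MetricSpace M]

/-- Fiber forward iterates `F_ω^n = F_{θ^{n-1}ω} ∘ ⋯ ∘ F_ω`. -/
def fIter (θ : Ω → Ω) (F : Ω → M → M) (ω : Ω) : ℕ → M → M
  | 0 => id
  | n + 1 => F (θ^[n] ω) ∘ fIter θ F ω n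

/-- Fiber Bowen metric `d_ω^n`. -/
def dBowen (θ : Ω → Ω) (F : Ω → M → M) (ω : Ω) (n : ℕ) (x y : M) : ℝ :=
  ((Finset.range n).sup fun i => nndist (fIter θ F ω i x) (fIter θ F ω i y) : ℝ≥0)

/-- The skew product `Θ(ω,x) = (θω, F_ω x)`. -/
def skew (θ : Ω → Ω) (F : Ω → M → M) : Ω × M → Ω × M :=
  fun p => (θ p.1, F p.1 p.2)

/-- The deviation set `P(α,δ,n,ω)` of points whose Birkhoff average up to time `n`
is `δ`-close to `α`. -/
def Pdev (θ : Ω → Ω) (F : Ω → M → M) (φ : Ω × M → ℝ) (α δ : ℝ) (n : ℕ) (ω : Ω) :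
    Set M :=
  {x | |(∑ i ∈ Finset.range n, φ ((skew θ F)^[i] (ω, x))) / (n : ℝ) - α| < δ}

/-- `M(α,δ,n,ε,ω)`: the largest cardinality of an `(ω,ε,n)`-separated subset of
`P(α,δ,n,ω)`, with the convention that it is `1` when `P(α,δ,n,ω) = ∅`. -/
def sepMax (θ : Ω → Ω) (F : Ω → M → M) (φ : Ω × M → ℝ) (α δ : ℝ) (n : ℕ) (ε : ℝ)
    (ω : Ω) : ℕ :=
  max 1 (sSup {k : ℕ | ∃ E : Finset M, (↑E : Set M) ⊆ Pdev θ F φ α δ n ω ∧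
    (∀ x ∈ E, ∀ y ∈ E, x ≠ y → ε < dBowen θ F ω n x y) ∧ E.card = k})

/-- Joint continuity of the fiber iterates. -/
lemma continuous_fIter (θ : Ω → Ω) (F : Ω → M → M) (hθ : Continuous θ)
    (hF : Continuous fun p : Ω × M => F p.1 p.2) :
    ∀ i, Continuous fun p : Ω × M => fIter θ F p.1 i p.2
  | 0 => continuous_snd
  | (i + 1) => by
      have h := continuous_fIter θ F hθ hF i
      exact hF.comp ((((hθ.iterate i).comp continuous_fst).prodMk h))

/-- Joint continuity of the fiber Bowen metric. -/
lemma continuous_dBowen (θ : Ω → Ω) (F : Ω → M → M) (hθ : Continuous θ)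
    (hF : Continuous fun p : Ω × M => F p.1 p.2) (n : ℕ) :
    Continuous fun p : Ω × M × M => dBowen θ F p.1 n p.2.1 p.2.2 := by
  have key : Continuous fun p : Ω × M × M =>
      ((Finset.range n).sup fun i =>
        nndist (fIter θ F p.1 i p.2.1) (fIter θ F p.1 i p.2.2) : ℝ≥0) := by
    induction n with
    | zero => simpa using continuous_const
    | succ n ih =>
        have hterm : Continuous fun p : Ω × M × M =>
            nndist (fIter θ F p.1 n p.2.1) (fIter θ F p.1 n p.2.2) := by
          apply Continuous.nndist
          · exact (continuous_fIter θ F hθ hF n).comp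
              (continuous_fst.prodMk (continuous_fst.comp continuous_snd))
          · exact (continuous_fIter θ F hθ hF n).comp
              (continuous_fst.prodMk (continuous_snd.comp continuous_snd))
        simp only [Finset.range_add_one, Finset.sup_insert]
        exact hterm.sup ih
  exact NNReal.continuous_coe.comp key

/-- The Bowen metric as a distance in the product space. -/
lemma dBowen_eq_dist (θ : Ω → Ω) (F : Ω → M → M) (ω : Ω) (n : ℕ) (x y : M) :
    dBowen θ F ω n x y =
      dist (fun i : Fin n => fIter θ F ω i x) (fun i : Fin n => fIter θ F ω i y) := by
  rw [dist_nndist, nndist_pi_def]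
  have : (Finset.range n) = (Finset.univ : Finset (Fin n)).map Fin.valEmbedding := by
    rw [Fin.map_valEmbedding_univ, Nat.Iio_eq_range]
  rw [dBowen, this, Finset.sup_map]
  rfl

/-- for fixed `α, δ, ε, n` the map `ω ↦ M(α,δ,n,ε,ω)` is measurable
with respect to the `P`-completion of the Borel σ-algebra of `Ω`. -/
theorem sepMax_null_measurable
    [CompactSpace Ω] [CompactSpace M]
    [MeasurableSpace Ω] [BorelSpace Ω] [MeasurableSpace M] [BorelSpace M]
    (θ : Ω → Ω) (hθ : Continuous θ)
    (F : Ω → M → M) (hF : Continuous fun p : Ω × M => F p.1 p.2)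
    (φ : Ω × M → ℝ) (hφ : Continuous φ)
    (α δ ε : ℝ) (hδ : 0 < δ) (hε : 0 < ε) (n : ℕ)
    (P : Measure Ω) [IsProbabilityMeasure P] :
    NullMeasurable (fun ω => sepMax θ F φ α δ n ε ω) P := by
  classical
  set S : Ω → Set ℕ := fun ω =>
    {k : ℕ | ∃ E : Finset M, (↑E : Set M) ⊆ Pdev θ F φ α δ n ω ∧
      (∀ x ∈ E, ∀ y ∈ E, x ≠ y → ε < dBowen θ F ω n x y) ∧ E.card = k} with hS
  -- 0 belongs to every S ω
  have h0 : ∀ ω, 0 ∈ S ω := by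
    intro ω
    exact ⟨∅, by simp, by simp, by simp⟩
  -- S ω is downward closed
  have hdown : ∀ ω, ∀ k ∈ S ω, ∀ j, j ≤ k → j ∈ S ω := by
    rintro ω k ⟨E, hE1, hE2, hE3⟩ j hj
    obtain ⟨E', hE'sub, hE'card⟩ := Finset.exists_subset_card_eq (s := E) (n := j) (hE3 ▸ hj)
    refine ⟨E', ?_, ?_, hE'card⟩
    · exact fun x hx => hE1 (Finset.coe_subset.2 hE'sub hx)
    · exact fun x hx y hy hxy => hE2 x (hE'sub hx) y (hE'sub hy) hxy
  -- S ω is bounded above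
  have hbdd : ∀ ω, BddAbove (S ω) := by
    intro ω
    rcases Nat.eq_zero_or_pos n with hn | hn
    · -- if n = 0, the Bowen distance is 0 and separated sets have at most one point
      refine ⟨1, fun k hk => ?_⟩
      obtain ⟨E, _, hE2, hE3⟩ := hk
      rw [← hE3]
      rw [Finset.card_le_one]
      intro a ha b hb
      by_contra hab
      have := hE2 a ha b hb hab
      rw [hn] at this
      simp [dBowen] at this
      exact absurd (hε.trans this) (lt_irrefl 0)
    · -- n ≥ 1 : compare with an ε/2-net in the compact space `Fin n → M`
      obtain ⟨t, -, htfin, htcover⟩ :=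
        (isCompact_univ : IsCompact (univ : Set (Fin n → M))).finite_cover_balls
          (half_pos hε)
      refine ⟨htfin.toFinset.card, fun k hk => ?_⟩
      obtain ⟨E, -, hE2, hE3⟩ := hk
      set G : M → (Fin n → M) := fun x i => fIter θ F ω i x with hG
      have hGsep : ∀ x ∈ E, ∀ y ∈ E, x ≠ y → ε < dist (G x) (G y) := by
        intro x hx y hy hxy
        have := hE2 x hx y hy hxy
        rwa [dBowen_eq_dist θ F ω n x y] at this
      -- choose a center for every point of the product space
      have hpick : ∀ z : Fin n → M, ∃ c ∈ t, z ∈ Metric.ball c (ε / 2) := by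
        intro z
        have := htcover (mem_univ z)
        simpa using this
      choose c hct hcb using hpick
      rw [← hE3]
      refine Finset.card_le_card_of_injOn (fun x => (c (G x))) ?_ ?_
      · intro a _
        simpa using hct (G a)
      · intro a ha b hb hab
        by_contra hne
        have hab' : c (G a) = c (G b) := hab
        have h1 : dist (G a) (c (G a)) < ε / 2 := hcb (G a)
        have h2 : dist (G b) (c (G b)) < ε / 2 := hcb (G b)
        have h3 : dist (G a) (G b) ≤ dist (G a) (c (G a)) + dist (c (G b)) (G b) := by
          have := dist_triangle (G a) (c (G a)) (G b)
          have h4 := dist_triangle (c (G a)) (c (G b)) (G b)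
          calc dist (G a) (G b) ≤ dist (G a) (c (G a)) + dist (c (G a)) (G b) := this
            _ ≤ dist (G a) (c (G a)) + (dist (c (G a)) (c (G b)) + dist (c (G b)) (G b)) := by
                linarith [h4]
            _ = dist (G a) (c (G a)) + dist (c (G b)) (G b) := by
                rw [hab']; simp
        have h5 : dist (G a) (G b) < ε := by
          have := dist_comm (c (G b)) (G b)
          rw [this] at h3
          linarith
        exact absurd (hGsep a ha b hb hne) (not_lt.2 h5.le)
  -- k ≤ sSup (S ω) ↔ k ∈ S ω
  have hchar : ∀ ω k, k ≤ sSup (S ω) ↔ k ∈ S ω := by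
    intro ω k
    constructor
    · intro hk
      exact hdown ω _ (Nat.sSup_mem ⟨0, h0 ω⟩ (hbdd ω)) k hk
    · intro hk
      exact le_csSup (hbdd ω) hk
  -- the set {ω | k ∈ S ω} is open
  have hopen : ∀ k, IsOpen {ω | k ∈ S ω} := by
    intro k
    rw [isOpen_iff_mem_nhds]
    rintro ω₀ ⟨E, hE1, hE2, hE3⟩
    have hskew : Continuous (skew θ F) := (hθ.comp continuous_fst).prodMk hF
    -- eventually E ⊆ Pdev
    have hPdev : ∀ x ∈ E, ∀ᶠ ω in 𝓝 ω₀, x ∈ Pdev θ F φ α δ n ω := by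
      intro x hx
      have hc : Continuous fun ω =>
          |(∑ i ∈ Finset.range n, φ ((skew θ F)^[i] (ω, x))) / (n : ℝ) - α| := by
        apply Continuous.abs
        apply Continuous.sub _ continuous_const
        apply Continuous.div_const
        apply continuous_finset_sum
        intro i _
        exact hφ.comp ((hskew.iterate i).comp (continuous_id.prodMk continuous_const))
      have h0' : (fun ω =>
          |(∑ i ∈ Finset.range n, φ ((skew θ F)^[i] (ω, x))) / (n : ℝ) - α|) ω₀ < δ :=
        hE1 hx
      exact hc.continuousAt.eventually_lt continuousAt_const h0'
    -- eventually E is separated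
    have hSep : ∀ x ∈ E, ∀ y ∈ E, x ≠ y →
        ∀ᶠ ω in 𝓝 ω₀, ε < dBowen θ F ω n x y := by
      intro x hx y hy hxy
      have hc : Continuous fun ω => dBowen θ F ω n x y :=
        (continuous_dBowen θ F hθ hF n).comp
          (continuous_id.prodMk (continuous_const.prodMk continuous_const))
      exact continuousAt_const.eventually_lt hc.continuousAt (hE2 x hx y hy hxy)
    have hev : ∀ᶠ ω in 𝓝 ω₀, k ∈ S ω := by
      have h1 : ∀ᶠ ω in 𝓝 ω₀, ∀ x ∈ E, x ∈ Pdev θ F φ α δ n ω :=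
        (eventually_all_finset E).2 hPdev
      have h2 : ∀ᶠ ω in 𝓝 ω₀, ∀ x ∈ E, ∀ y ∈ E, x ≠ y → ε < dBowen θ F ω n x y := by
        refine (eventually_all_finset E).2 fun x hx => ?_
        refine (eventually_all_finset E).2 fun y hy => ?_
        by_cases hxy : x = y
        · exact Filter.Eventually.of_forall fun ω h => absurd hxy h
        · exact (hSep x hx y hy hxy).mono fun ω h _ => h
      filter_upwards [h1, h2] with ω hω1 hω2
      exact ⟨E, fun x hx => hω1 x hx, hω2, hE3⟩
    exact hev
  -- measurability of ω ↦ sSup (S ω)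
  have hm : Measurable fun ω => sSup (S ω) := by
    apply measurable_to_countable'
    intro k
    have : (fun ω => sSup (S ω)) ⁻¹' {k} =
        {ω | k ∈ S ω} \ {ω | (k + 1) ∈ S ω} := by
      ext ω
      simp only [mem_preimage, mem_singleton_iff, mem_diff, mem_setOf_eq]
      constructor
      · intro h
        refine ⟨(hchar ω k).1 (le_of_eq h.symm), fun hk1 => ?_⟩
        have := (hchar ω (k + 1)).2 hk1
        omega
      · rintro ⟨h1, h2⟩
        have hle : k ≤ sSup (S ω) := (hchar ω k).2 h1
        have hlt : ¬ (k + 1 ≤ sSup (S ω)) := fun h => h2 ((hchar ω (k + 1)).1 h)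
        omega
    rw [this]
    exact ((hopen k).measurableSet).diff ((hopen (k + 1)).measurableSet)
  have : Measurable fun ω => sepMax θ F φ α δ n ε ω := by
    have : (fun ω => sepMax θ F φ α δ n ε ω) = fun ω => max 1 (sSup (S ω)) := rfl
    rw [this]
    exact measurable_const.max hm
  exact this.nullMeasurable

end Paper
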